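/- Let G be a game in G_single with n ≤ 5 jobs. For every tie-breaking rule M and every Nash equilibrium σ with respect to M, val(OPT) ≤ 2·val(σ); that is, the price of anarchy of G is at most 2. -/

import Mathlib

open Classical

/-- An interval scheduling game: jobs `Fin n`, colors `Fin c`, horizon `[0, T)`,
and for each job a color, a length and a weight. -/
structure Game where
  n : ℕ
  c : ℕ
  T : ℝ
  T_pos : 0 < T
  color : Fin n → Fin c
  len : Fin n → ℝ
  wt : Fin n → ℝ
  len_nonneg : ∀ j, 0 ≤ len j
  len_le_T : ∀ j, len j ≤ T
  wt_nonneg : ∀ j, 0 ≤ wt j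

/-- A strategy profile assigns a feasible start time to every job, so that job `j`
occupies `[start j, start j + len j) ⊆ [0, T)`. -/
structure Game.Profile (G : Game) where
  start : Fin G.n → ℝ
  start_nonneg : ∀ j, 0 ≤ start j
  start_le : ∀ j, start j + G.len j ≤ G.T

/-- A machine configuration assigns a color to every time point. -/
abbrev Game.Config (G : Game) : Type := ℝ → Fin G.c

/-- Job `j` is covered if the machine is configured to its color throughout its
processing interval `[start j, start j + len j)`. -/
def Game.Covered (G : Game) (s : G.Profile) (γ : G.Config) (j : Fin G.n) : Prop :=
  ∀ t : ℝ, s.start j ≤ t → t < s.start j + G.len j → γ t = G.color j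

/-- The profit of a configuration: total weight of covered jobs. -/
noncomputable def Game.profit (G : Game) (s : G.Profile) (γ : G.Config) : ℝ :=
  ∑ j : Fin G.n, if G.Covered s γ j then G.wt j else 0

/-- The value of a profile: the maximal profit over machine configurations. -/
noncomputable def Game.val (G : Game) (s : G.Profile) : ℝ :=
  sSup {x : ℝ | ∃ γ : G.Config, x = G.profit s γ}

/-- The social optimum value: the maximal value over strategy profiles. -/
noncomputable def Game.valOPT (G : Game) : ℝ :=
  sSup {x : ℝ | ∃ s : G.Profile, x = G.val s}

/-- A tie-breaking rule selects, for every profile, a configuration of maximal profit. -/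
structure Game.TieBreak (G : Game) where
  choice : G.Profile → G.Config
  choice_opt : ∀ s : G.Profile, G.profit s (choice s) = G.val s

/-- Utility of player `i` under tie-breaking rule `M`: total weight of covered jobs
of color `i`. -/
noncomputable def Game.utility (G : Game) (M : G.TieBreak) (i : Fin G.c) (s : G.Profile) : ℝ :=
  ∑ j : Fin G.n, if G.color j = i ∧ G.Covered s (M.choice s) j then G.wt j else 0

/-- Nash equilibrium with respect to tie-breaking rule `M`: no player can strictly
increase its utility by relocating only the jobs of its own color. -/
def Game.IsNE (G : Game) (M : G.TieBreak) (s : G.Profile) : Prop :=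
  ∀ (i : Fin G.c) (s' : G.Profile),
    (∀ j, G.color j ≠ i → s'.start j = s.start j) →
      G.utility M i s' ≤ G.utility M i s

/-- The class `G_single`: exactly one job of each color (`n = c`). -/
def Game.Single (G : Game) : Prop := Function.Bijective G.color

-- infrastructure lemmas to be inserted before the theorem
namespace Game

variable {G : Game}

lemma profit_nonneg (s : G.Profile) (γ : G.Config) : 0 ≤ G.profit s γ := by
  apply Finset.sum_nonneg
  intro j _
  split <;> simp [G.wt_nonneg j]

lemma profit_le_wsum (s : G.Profile) (γ : G.Config) : G.profit s γ ≤ ∑ j, G.wt j := by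
  apply Finset.sum_le_sum
  intro j _
  split <;> simp [G.wt_nonneg j]

lemma profit_le_val (s : G.Profile) (γ : G.Config) : G.profit s γ ≤ G.val s := by
  apply le_csSup
  · exact ⟨∑ j, G.wt j, by rintro x ⟨γ', rfl⟩; exact G.profit_le_wsum s γ'⟩
  · exact ⟨γ, rfl⟩

lemma val_nonneg (s : G.Profile) : 0 ≤ G.val s := by
  rcases isEmpty_or_nonempty G.Config with h | hne
  · have : {x : ℝ | ∃ γ : G.Config, x = G.profit s γ} = ∅ := by
      ext x; simp only [Set.mem_setOf_eq, Set.mem_empty_iff_false, iff_false]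
      rintro ⟨γ, -⟩; exact h.elim γ
    rw [Game.val, this, Real.sSup_empty]
  · obtain ⟨γ⟩ := hne
    exact le_trans (G.profit_nonneg s γ) (G.profit_le_val s γ)

lemma wt_le_val (s : G.Profile) (j : Fin G.n) : G.wt j ≤ G.val s := by
  have hcov : G.Covered s (fun _ => G.color j) j := fun t _ _ => rfl
  have h1 : G.wt j ≤ G.profit s (fun _ => G.color j) := by
    have := Finset.single_le_sum
      (f := fun k => if G.Covered s (fun _ => G.color j) k then G.wt k else 0)
      (fun k _ => by split <;> simp [G.wt_nonneg k]) (Finset.mem_univ j)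
    simpa [hcov, Game.profit] using this
  exact le_trans h1 (G.profit_le_val s _)

lemma covered_of_len_nonpos {s : G.Profile} {γ : G.Config} {j : Fin G.n}
    (h : G.len j ≤ 0) : G.Covered s γ j := by
  intro t ht ht'
  exact ((lt_irrefl t) (by linarith)).elim

lemma cov_disjoint (hinj : Function.Injective G.color) {s : G.Profile} {γ : G.Config}
    {x y : Fin G.n} (hx : G.Covered s γ x) (hy : G.Covered s γ y) (hxy : x ≠ y)
    (hpx : 0 < G.len x) (hpy : 0 < G.len y) :
    s.start x + G.len x ≤ s.start y ∨ s.start y + G.len y ≤ s.start x := by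
  by_contra h
  push_neg at h
  set t := max (s.start x) (s.start y) with ht
  have h1 : γ t = G.color x := hx t (le_max_left _ _) (by
    rcases max_cases (s.start x) (s.start y) with ⟨he, _⟩ | ⟨he, _⟩ <;> rw [ht, he] <;> linarith [h.2])
  have h2 : γ t = G.color y := hy t (le_max_right _ _) (by
    rcases max_cases (s.start x) (s.start y) with ⟨he, _⟩ | ⟨he, _⟩ <;> rw [ht, he] <;> linarith [h.1])
  exact hxy (hinj (h1.symm.trans h2))

/-- pairwise disjoint half-open intervals inside `[0,T)` have total length at most `T`. -/
lemma sum_len_le {S : Finset (Fin G.n)} (st : Fin G.n → ℝ)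
    (h0 : ∀ j ∈ S, 0 ≤ st j) (hT : ∀ j ∈ S, st j + G.len j ≤ G.T)
    (hdisj : ∀ x ∈ S, ∀ y ∈ S, x ≠ y → 0 < G.len x → 0 < G.len y →
      st x + G.len x ≤ st y ∨ st y + G.len y ≤ st x) :
    ∑ j ∈ S, G.len j ≤ G.T := by
  have hpair : (S : Set (Fin G.n)).PairwiseDisjoint
      (fun j => Set.Ico (st j) (st j + G.len j)) := by
    intro x hx y hy hxy
    rcases le_or_gt (G.len x) 0 with hlx | hlx
    · simp [Set.Ico_eq_empty (by linarith : ¬ st x < st x + G.len x), Function.onFun]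
    rcases le_or_gt (G.len y) 0 with hly | hly
    · simp [Set.Ico_eq_empty (by linarith : ¬ st y < st y + G.len y), Function.onFun]
    rcases hdisj x hx y hy hxy hlx hly with h | h
    · refine Set.disjoint_left.2 ?_
      rintro a ⟨ha1, ha2⟩ ⟨hb1, hb2⟩; linarith
    · refine Set.disjoint_left.2 ?_
      rintro a ⟨ha1, ha2⟩ ⟨hb1, hb2⟩; linarith
  have hmeas := MeasureTheory.measure_biUnion_finset (μ := MeasureTheory.volume) hpair
    (fun j _ => measurableSet_Ico)
  have hsub : (⋃ j ∈ S, Set.Ico (st j) (st j + G.len j)) ⊆ Set.Ico 0 G.T := by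
    intro a ha
    simp only [Set.mem_iUnion] at ha
    obtain ⟨j, hj, ha1, ha2⟩ := ha
    exact ⟨le_trans (h0 j hj) ha1, lt_of_lt_of_le ha2 (hT j hj)⟩
  have hle := MeasureTheory.measure_mono (μ := MeasureTheory.volume) hsub
  rw [hmeas] at hle
  simp only [Real.volume_Ico, sub_zero] at hle
  have hsum : ∑ j ∈ S, (ENNReal.ofReal (st j + G.len j - st j))
      = ENNReal.ofReal (∑ j ∈ S, G.len j) := by
    rw [← ENNReal.ofReal_sum_of_nonneg (fun i _ => by linarith [G.len_nonneg i])]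
    congr 1
    apply Finset.sum_congr rfl
    intro j _; ring
  rw [hsum] at hle
  exact (ENNReal.ofReal_le_ofReal_iff (le_of_lt G.T_pos)).1 hle

end Game


namespace Game

variable {G : Game}

/-- Core NE consequence: if job `j` is uncovered (and of positive weight), then for any
feasible position `[t, t+len j)` and any σ-compatible family `F ∌ j` whose positive-length
members avoid `[t, t+len j)`, the weight of `j` plus the weight of `F` is at most `val s`. -/
lemma MI (hinj : Function.Injective G.color) (M : G.TieBreak) (s : G.Profile)
    (hNE : G.IsNE M s) {j : Fin G.n}
    (hjunc : ¬ G.Covered s (M.choice s) j) (hwj : 0 < G.wt j)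
    {t : ℝ} (ht0 : 0 ≤ t) (htT : t + G.len j ≤ G.T)
    {F : Finset (Fin G.n)} (hjF : j ∉ F)
    (hFdisj : ∀ x ∈ F, ∀ y ∈ F, x ≠ y → 0 < G.len x → 0 < G.len y →
      s.start x + G.len x ≤ s.start y ∨ s.start y + G.len y ≤ s.start x)
    (hFavoid : ∀ x ∈ F, 0 < G.len x →
      s.start x + G.len x ≤ t ∨ t + G.len j ≤ s.start x) :
    G.wt j + ∑ k ∈ F, G.wt k ≤ G.val s := by
  classical
  have hpj : 0 < G.len j := by
    by_contra h
    exact hjunc (covered_of_len_nonpos (le_of_not_gt h))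
  have h0' : ∀ k, 0 ≤ Function.update s.start j t k := by
    intro k; by_cases hk : k = j
    · subst hk; simpa using ht0
    · rw [Function.update_of_ne hk]; exact s.start_nonneg k
  have hT' : ∀ k, Function.update s.start j t k + G.len k ≤ G.T := by
    intro k; by_cases hk : k = j
    · subst hk; simpa using htT
    · rw [Function.update_of_ne hk]; exact s.start_le k
  set s' : G.Profile := ⟨Function.update s.start j t, h0', hT'⟩ with hs'def
  have hs'j : s'.start j = t := Function.update_self j t s.start
  have hs'k : ∀ k, k ≠ j → s'.start k = s.start k :=
    fun k hk => Function.update_of_ne hk t s.start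
  obtain ⟨γF, hcovj, hcovF⟩ : ∃ γF : G.Config,
      G.Covered s' γF j ∧ ∀ x ∈ F, G.Covered s' γF x := by
    refine ⟨fun r => if t ≤ r ∧ r < t + G.len j then G.color j
      else if h : ∃ x, x ∈ F ∧ 0 < G.len x ∧ s.start x ≤ r ∧ r < s.start x + G.len x
        then G.color h.choose else G.color j, ?_, ?_⟩
    · intro r hr hr'
      rw [hs'j] at hr hr'
      dsimp only
      rw [if_pos ⟨hr, hr'⟩]
    · intro x hx
      rcases le_or_gt (G.len x) 0 with hlx | hlx
      · exact covered_of_len_nonpos hlx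
      intro r hr hr'
      have hxj : x ≠ j := fun h => hjF (h ▸ hx)
      rw [hs'k x hxj] at hr hr'
      have hnot : ¬ (t ≤ r ∧ r < t + G.len j) := by
        rcases hFavoid x hx hlx with h | h
        · rintro ⟨h1, h2⟩; linarith
        · rintro ⟨h1, h2⟩; linarith
      have hex : ∃ y, y ∈ F ∧ 0 < G.len y ∧ s.start y ≤ r ∧ r < s.start y + G.len y :=
        ⟨x, hx, hlx, hr, hr'⟩
      dsimp only
      rw [if_neg hnot, dif_pos hex]
      obtain ⟨hy1, hy2, hy3, hy4⟩ := hex.choose_spec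
      congr 1
      by_contra hne
      rcases hFdisj _ hy1 _ hx hne hy2 hlx with h | h <;> linarith
  have hprofF : G.wt j + ∑ k ∈ F, G.wt k ≤ G.profit s' γF := by
    have h1 : ∑ k ∈ insert j F, (if G.Covered s' γF k then G.wt k else 0)
        ≤ G.profit s' γF := by
      apply Finset.sum_le_sum_of_subset_of_nonneg (Finset.subset_univ _)
      intro k _ _; split <;> simp [G.wt_nonneg k]
    rw [Finset.sum_insert hjF, if_pos hcovj] at h1
    refine le_trans (le_of_eq ?_) h1
    congr 1
    exact (Finset.sum_congr rfl (fun k hk => (if_pos (hcovF k hk)).symm))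
  have hucov' : ¬ G.Covered s' (M.choice s') j := by
    intro hc
    have hut0 : G.utility M (G.color j) s = 0 := by
      apply Finset.sum_eq_zero
      intro k _
      by_cases hk : G.color k = G.color j ∧ G.Covered s (M.choice s) k
      · exfalso
        have hkj : k = j := hinj hk.1
        rw [hkj] at hk
        exact hjunc hk.2
      · rw [if_neg hk]
    have hge : G.wt j ≤ G.utility M (G.color j) s' := by
      have := Finset.single_le_sum
        (f := fun k => if G.color k = G.color j ∧ G.Covered s' (M.choice s') k
          then G.wt k else 0)
        (fun k _ => by split <;> simp [G.wt_nonneg k]) (Finset.mem_univ j)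
      simpa [hc, Game.utility] using this
    have hne := hNE (G.color j) s' (fun k hk => hs'k k (fun h => hk (by rw [h])))
    rw [hut0] at hne
    linarith
  have hval' : G.val s' ≤ G.val s := by
    rw [← M.choice_opt s']
    have h1 : G.profit s' (M.choice s') ≤ G.profit s (M.choice s') := by
      apply Finset.sum_le_sum
      intro k _
      by_cases hk : k = j
      · subst hk
        rw [if_neg hucov']
        split <;> simp [G.wt_nonneg]
      · have hkk : G.Covered s' (M.choice s') k ↔ G.Covered s (M.choice s') k := by
          unfold Game.Covered
          rw [hs'k k hk]
        by_cases hcc : G.Covered s' (M.choice s') k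
        · rw [if_pos hcc, if_pos (hkk.1 hcc)]
        · rw [if_neg hcc]; split <;> simp [G.wt_nonneg k]
    exact le_trans h1 (G.profit_le_val s _)
  exact le_trans hprofF (le_trans (G.profit_le_val s' γF) hval')

end Game


namespace Game

variable {G : Game}

/-- The set of jobs covered under the tie-breaking configuration. -/
noncomputable def CovSet (G : Game) (M : G.TieBreak) (s : G.Profile) : Finset (Fin G.n) :=
  Finset.univ.filter (fun j => G.Covered s (M.choice s) j)

lemma mem_covset {M : G.TieBreak} {s : G.Profile} {k : Fin G.n} :
    k ∈ G.CovSet M s ↔ G.Covered s (M.choice s) k := by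
  simp [Game.CovSet]

lemma covset_sum (M : G.TieBreak) (s : G.Profile) :
    ∑ k ∈ G.CovSet M s, G.wt k = G.val s := by
  rw [Game.CovSet, Finset.sum_filter, ← M.choice_opt s]
  rfl

/-- The set of covered positive-length jobs whose σ-interval meets `[t, t + len j)`. -/
noncomputable def HitSet (G : Game) (M : G.TieBreak) (s : G.Profile) (t : ℝ) (j : Fin G.n) :
    Finset (Fin G.n) :=
  (G.CovSet M s).filter
    (fun k => 0 < G.len k ∧ t < s.start k + G.len k ∧ s.start k < t + G.len j)

lemma mem_hitset {M : G.TieBreak} {s : G.Profile} {t : ℝ} {j k : Fin G.n} :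
    k ∈ G.HitSet M s t j ↔ k ∈ G.CovSet M s ∧ 0 < G.len k ∧
      t < s.start k + G.len k ∧ s.start k < t + G.len j := by
  simp [Game.HitSet, Finset.mem_filter, and_assoc]

/-- Job `a` can be feasibly placed avoiding the σ-interval of job `b`. -/
def Av (G : Game) (s : G.Profile) (a b : Fin G.n) : Prop :=
  ∃ t, 0 ≤ t ∧ t + G.len a ≤ G.T ∧ (s.start b + G.len b ≤ t ∨ t + G.len a ≤ s.start b)

lemma noAv (s : G.Profile) {a b : Fin G.n} (h : ¬ G.Av s a b) :
    s.start b < G.len a ∧ G.T - (s.start b + G.len b) < G.len a := by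
  unfold Game.Av at h
  push_neg at h
  constructor
  · have := h 0 le_rfl (by simpa using G.len_le_T a)
    simpa using this.2
  · by_contra hc
    push_neg at hc
    have h0 : (0:ℝ) ≤ s.start b + G.len b := by
      have h1 := s.start_nonneg b; have h2 := G.len_nonneg b; linarith
    have := h (s.start b + G.len b) h0 (by linarith)
    linarith [this.1]

lemma hit_bound (hinj : Function.Injective G.color) {M : G.TieBreak} {s : G.Profile}
    (hNE : G.IsNE M s) {j : Fin G.n} (hj : j ∉ G.CovSet M s) (hw : 0 < G.wt j)
    {t : ℝ} (ht0 : 0 ≤ t) (htT : t + G.len j ≤ G.T) :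
    G.wt j ≤ ∑ k ∈ G.HitSet M s t j, G.wt k := by
  classical
  have hjunc : ¬ G.Covered s (M.choice s) j := fun h => hj (mem_covset.2 h)
  have hsub : G.HitSet M s t j ⊆ G.CovSet M s := Finset.filter_subset _ _
  have hjF : j ∉ G.CovSet M s \ G.HitSet M s t j :=
    fun hmem => hj (Finset.sdiff_subset hmem)
  have hFdisj : ∀ x ∈ G.CovSet M s \ G.HitSet M s t j,
      ∀ y ∈ G.CovSet M s \ G.HitSet M s t j, x ≠ y → 0 < G.len x → 0 < G.len y →
      s.start x + G.len x ≤ s.start y ∨ s.start y + G.len y ≤ s.start x := by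
    intro x hx y hy hxy hlx hly
    exact cov_disjoint hinj (mem_covset.1 (Finset.sdiff_subset hx))
      (mem_covset.1 (Finset.sdiff_subset hy)) hxy hlx hly
  have hFavoid : ∀ x ∈ G.CovSet M s \ G.HitSet M s t j, 0 < G.len x →
      s.start x + G.len x ≤ t ∨ t + G.len j ≤ s.start x := by
    intro x hx hlx
    obtain ⟨hxC, hxH⟩ := Finset.mem_sdiff.1 hx
    rcases le_or_gt (s.start x + G.len x) t with h | h
    · exact Or.inl h
    rcases le_or_gt (t + G.len j) (s.start x) with h2 | h2
    · exact Or.inr h2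
    exact absurd (Finset.mem_filter.2 ⟨hxC, hlx, h, h2⟩) hxH
  have hMI := MI hinj M s hNE hjunc hw ht0 htT hjF hFdisj hFavoid
  have hsd := Finset.sum_sdiff (f := G.wt) hsub
  have hcs := G.covset_sum M s
  linarith

lemma pair_bound (hinj : Function.Injective G.color) {M : G.TieBreak} {s : G.Profile}
    (hNE : G.IsNE M s) {j : Fin G.n} (hj : j ∉ G.CovSet M s) (hw : 0 < G.wt j)
    {y : Fin G.n} (hyj : y ≠ j) (hav : G.Av s j y) :
    G.wt j + G.wt y ≤ G.val s := by
  classical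
  obtain ⟨t, ht0, htT, hor⟩ := hav
  have hjunc : ¬ G.Covered s (M.choice s) j := fun h => hj (mem_covset.2 h)
  have hjF : j ∉ ({y} : Finset (Fin G.n)) := Finset.notMem_singleton.2 (Ne.symm hyj)
  have hFdisj : ∀ x ∈ ({y} : Finset (Fin G.n)), ∀ z ∈ ({y} : Finset (Fin G.n)),
      x ≠ z → 0 < G.len x → 0 < G.len z →
      s.start x + G.len x ≤ s.start z ∨ s.start z + G.len z ≤ s.start x := by
    intro x hx z hz hxz _ _
    rw [Finset.mem_singleton] at hx hz
    exact absurd (hx.trans hz.symm) hxz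
  have hFavoid : ∀ x ∈ ({y} : Finset (Fin G.n)), 0 < G.len x →
      s.start x + G.len x ≤ t ∨ t + G.len j ≤ s.start x := by
    intro x hx _
    rw [Finset.mem_singleton] at hx
    subst hx
    exact hor
  have hMI := MI hinj M s hNE hjunc hw ht0 htT hjF hFdisj hFavoid
  simpa using hMI

end Game


namespace Game

variable {G : Game}

lemma key_profit_le (hinj : Function.Injective G.color) (hn : G.n ≤ 5) (M : G.TieBreak)
    (s : G.Profile) (hNE : G.IsNE M s) (τ : G.Profile) (δ : G.Config) :
    G.profit τ δ ≤ 2 * G.val s := by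
  classical
  set V := G.val s with hV
  set Cov : Finset (Fin G.n) := G.CovSet M s with hCov
  set O : Finset (Fin G.n) := Finset.univ.filter (fun j => G.Covered τ δ j) with hOdef
  set A : Finset (Fin G.n) := Cov.filter (fun k => k ∉ O) with hAdef
  set B : Finset (Fin G.n) := Cov.filter (fun k => k ∈ O) with hBdef
  set D : Finset (Fin G.n) := O.filter (fun j => j ∉ Cov ∧ 0 < G.wt j) with hDdef
  have hmemO : ∀ k, k ∈ O ↔ G.Covered τ δ k := by intro k; simp [hOdef]
  have hVeq : ∑ k ∈ Cov, G.wt k = V := G.covset_sum M s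
  have hV0 : 0 ≤ V := G.val_nonneg s
  have hA0 : 0 ≤ ∑ k ∈ A, G.wt k := Finset.sum_nonneg (fun k _ => G.wt_nonneg k)
  have hAB : (∑ k ∈ A, G.wt k) + (∑ k ∈ B, G.wt k) = V := by
    rw [hAdef, hBdef, ← hVeq, add_comm]
    exact Finset.sum_filter_add_sum_filter_not _ _ _
  -- basic membership facts
  have hDO : ∀ j ∈ D, j ∈ O := fun j hj => (Finset.mem_filter.1 hj).1
  have hDnC : ∀ j ∈ D, j ∉ Cov := fun j hj => ((Finset.mem_filter.1 hj).2).1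
  have hDw : ∀ j ∈ D, 0 < G.wt j := fun j hj => ((Finset.mem_filter.1 hj).2).2
  have hDl : ∀ j ∈ D, 0 < G.len j := by
    intro j hj
    by_contra h
    exact hDnC j hj (mem_covset.2 (covered_of_len_nonpos (le_of_not_gt h)))
  have hBO : ∀ k ∈ B, k ∈ O := fun k hk => (Finset.mem_filter.1 hk).2
  have hBC : ∀ k ∈ B, k ∈ Cov := fun k hk => (Finset.mem_filter.1 hk).1
  -- reduce to the core inequality
  suffices hcore : ∑ k ∈ D, G.wt k ≤ V + ∑ k ∈ A, G.wt k by
    have hPO : G.profit τ δ = ∑ k ∈ O, G.wt k := by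
      rw [hOdef, Finset.sum_filter]; rfl
    have hsplitO : ∑ k ∈ O, G.wt k
        = (∑ k ∈ O.filter (fun k => k ∈ Cov), G.wt k)
          + ∑ k ∈ O.filter (fun k => k ∉ Cov), G.wt k := by
      rw [Finset.sum_filter_add_sum_filter_not]
    have h1 : ∑ k ∈ O.filter (fun k => k ∈ Cov), G.wt k ≤ ∑ k ∈ B, G.wt k := by
      apply Finset.sum_le_sum_of_subset_of_nonneg
      · intro k hk
        obtain ⟨hkO, hkC⟩ := Finset.mem_filter.1 hk
        exact Finset.mem_filter.2 ⟨hkC, hkO⟩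
      · intro k _ _; exact G.wt_nonneg k
    have h2 : ∑ k ∈ O.filter (fun k => k ∉ Cov), G.wt k ≤ ∑ k ∈ D, G.wt k := by
      rw [← Finset.sum_filter_add_sum_filter_not (O.filter (fun k => k ∉ Cov))
        (fun k => 0 < G.wt k)]
      have he1 : (O.filter (fun k => k ∉ Cov)).filter (fun k => 0 < G.wt k) = D := by
        rw [hDdef, Finset.filter_filter]
      have he2 : ∑ k ∈ (O.filter (fun k => k ∉ Cov)).filter (fun k => ¬ 0 < G.wt k),
          G.wt k = 0 := by
        apply Finset.sum_eq_zero
        intro k hk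
        have := (Finset.mem_filter.1 hk).2
        exact le_antisymm (le_of_not_gt this) (G.wt_nonneg k)
      rw [he1, he2, add_zero]
    linarith
  -- packing facts
  have hOd : ∀ x ∈ O, ∀ y ∈ O, x ≠ y → 0 < G.len x → 0 < G.len y →
      τ.start x + G.len x ≤ τ.start y ∨ τ.start y + G.len y ≤ τ.start x := by
    intro x hx y hy hxy hlx hly
    exact cov_disjoint hinj ((hmemO x).1 hx) ((hmemO y).1 hy) hxy hlx hly
  have hOT : ∑ j ∈ O, G.len j ≤ G.T :=
    sum_len_le τ.start (fun j _ => τ.start_nonneg j) (fun j _ => τ.start_le j) hOd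
  have hpack : ∀ S : Finset (Fin G.n), S ⊆ O → ∑ j ∈ S, G.len j ≤ G.T := by
    intro S hS
    exact le_trans (Finset.sum_le_sum_of_subset_of_nonneg hS
      (fun j _ _ => G.len_nonneg j)) hOT
  have hpack3 : ∀ a b c, a ∈ O → b ∈ O → c ∈ O → a ≠ b → a ≠ c → b ≠ c →
      G.len a + G.len b + G.len c ≤ G.T := by
    intro a b c ha hb hc hab hac hbc
    have hsub : ({a, b, c} : Finset (Fin G.n)) ⊆ O := by
      intro k hk
      simp only [Finset.mem_insert, Finset.mem_singleton] at hk
      rcases hk with rfl | rfl | rfl <;> assumption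
    have := hpack _ hsub
    rwa [Finset.sum_insert (by simp [hab, hac]),
      Finset.sum_insert (by simp [hbc]), Finset.sum_singleton, ← add_assoc] at this
  -- hit-set bounds
  have hhit : ∀ j ∈ D, ∀ t : ℝ, 0 ≤ t → t + G.len j ≤ G.T →
      G.wt j ≤ ∑ k ∈ G.HitSet M s t j, G.wt k :=
    fun j hj t ht0 htT => hit_bound hinj hNE (hDnC j hj) (hDw j hj) ht0 htT
  have hhitsplit : ∀ (j : Fin G.n) (t : ℝ),
      (∑ k ∈ G.HitSet M s t j, G.wt k)
        ≤ (∑ k ∈ (G.HitSet M s t j).filter (fun k => k ∈ O), G.wt k)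
          + ∑ k ∈ A, G.wt k := by
    intro j t
    rw [← Finset.sum_filter_add_sum_filter_not (G.HitSet M s t j) (fun k => k ∈ O)]
    have hsub2 : (G.HitSet M s t j).filter (fun k => k ∉ O) ⊆ A := by
      intro k hk
      obtain ⟨hk1, hk2⟩ := Finset.mem_filter.1 hk
      exact Finset.mem_filter.2 ⟨(mem_hitset.1 hk1).1, hk2⟩
    have := Finset.sum_le_sum_of_subset_of_nonneg hsub2 (fun k _ _ => G.wt_nonneg k)
    linarith
  have hhitB : ∀ (j : Fin G.n) (t : ℝ), (G.HitSet M s t j).filter (fun k => k ∈ O) ⊆ B := by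
    intro j t k hk
    obtain ⟨hk1, hk2⟩ := Finset.mem_filter.1 hk
    exact Finset.mem_filter.2 ⟨(mem_hitset.1 hk1).1, hk2⟩
  -- free jobs
  have hfree : ∀ j ∈ D, (∃ t : ℝ, 0 ≤ t ∧ t + G.len j ≤ G.T ∧
      ∀ k ∈ G.HitSet M s t j, k ∉ O) → G.wt j ≤ ∑ k ∈ A, G.wt k := by
    intro j hj ⟨t, ht0, htT, hak⟩
    refine le_trans (hhit j hj t ht0 htT) ?_
    apply Finset.sum_le_sum_of_subset_of_nonneg
    · intro k hk
      exact Finset.mem_filter.2 ⟨(mem_hitset.1 hk).1, hak k hk⟩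
    · intro k _ _; exact G.wt_nonneg k
  -- pair bound via avoidance
  have hpair : ∀ j ∈ D, ∀ y : Fin G.n, y ≠ j → G.Av s j y → G.wt j + G.wt y ≤ V :=
    fun j hj y hyj hav => pair_bound hinj hNE (hDnC j hj) (hDw j hj) hyj hav
  -- cardinality bookkeeping
  have hcard : Cov.card + D.card ≤ 5 := by
    have hdisj : Disjoint Cov D := Finset.disjoint_left.2 (fun a haC haD => hDnC a haD haC)
    calc Cov.card + D.card = (Cov ∪ D).card := (Finset.card_union_of_disjoint hdisj).symm
      _ ≤ Fintype.card (Fin G.n) := Finset.card_le_univ _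
      _ = G.n := Fintype.card_fin _
      _ ≤ 5 := hn
  have hD5 : D.card ≤ 5 := by omega
  -- case analysis on the number of optimal-only jobs
  interval_cases hu : D.card
  · -- 0 jobs
    rw [Finset.card_eq_zero.1 hu, Finset.sum_empty]
    linarith
  · -- 1 job
    obtain ⟨x, hx⟩ := Finset.card_eq_one.1 hu
    rw [hx, Finset.sum_singleton]
    have := G.wt_le_val s x
    linarith
  · -- 2 jobs
    obtain ⟨x, y, hxy, hDeq⟩ := Finset.card_eq_two.1 hu
    have hxD : x ∈ D := by rw [hDeq]; simp
    have hyD : y ∈ D := by rw [hDeq]; simp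
    have hx0 : 0 ≤ G.T - G.len x := by linarith [G.len_le_T x]
    have hhy := hhit y hyD 0 le_rfl (by simpa using G.len_le_T y)
    have hhx := hhit x hxD (G.T - G.len x) hx0 (by linarith)
    have hsy := hhitsplit y 0
    have hsx := hhitsplit x (G.T - G.len x)
    set H1 := (G.HitSet M s 0 y).filter (fun k => k ∈ O) with hH1
    set H2 := (G.HitSet M s (G.T - G.len x) x).filter (fun k => k ∈ O) with hH2
    have hdisj : Disjoint H1 H2 := by
      rw [Finset.disjoint_left]
      intro k hk1 hk2
      obtain ⟨hk1h, hk1O⟩ := Finset.mem_filter.1 hk1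
      obtain ⟨hk2h, -⟩ := Finset.mem_filter.1 hk2
      obtain ⟨hkC, hkl, he1, hs1⟩ := mem_hitset.1 hk1h
      obtain ⟨-, -, he2, hs2⟩ := mem_hitset.1 hk2h
      rw [← hCov] at hkC
      have hkx : x ≠ k := fun h => hDnC x hxD (h ▸ hkC)
      have hky : y ≠ k := fun h => hDnC y hyD (h ▸ hkC)
      have hp3 := hpack3 x y k (hDO x hxD) (hDO y hyD) hk1O hxy hkx hky
      linarith
    have hsum12 : (∑ k ∈ H1, G.wt k) + (∑ k ∈ H2, G.wt k) ≤ ∑ k ∈ B, G.wt k := by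
      rw [← Finset.sum_union hdisj]
      apply Finset.sum_le_sum_of_subset_of_nonneg
      · intro k hk
        rcases Finset.mem_union.1 hk with h | h
        · exact hhitB y 0 h
        · exact hhitB x (G.T - G.len x) h
      · intro k _ _; exact G.wt_nonneg k
    rw [hDeq, Finset.sum_pair hxy]
    linarith
  · -- 3 jobs
    obtain ⟨x, y, z, hxy, hxz, hyz, hDeq⟩ := Finset.card_eq_three.1 hu
    have hxD : x ∈ D := by rw [hDeq]; simp
    have hyD : y ∈ D := by rw [hDeq]; simp
    have hzD : z ∈ D := by rw [hDeq]; simp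
    set FreeP : Fin G.n → Prop := fun j => ∃ t : ℝ, 0 ≤ t ∧ t + G.len j ≤ G.T ∧
      ∀ k ∈ G.HitSet M s t j, k ∉ O with hFreeP
    have hblocked : ∀ j ∈ D, ¬ FreeP j → ∀ t : ℝ, 0 ≤ t → t + G.len j ≤ G.T →
        ∃ k, k ∈ G.HitSet M s t j ∧ k ∈ O := by
      intro j hj hnf t ht0 htT
      by_contra hc
      push_neg at hc
      exact hnf ⟨t, ht0, htT, hc⟩
    have htwo : ∀ j1 j2 : Fin G.n, j1 ∈ D → j2 ∈ D →
        j1 ≠ j2 → ¬ FreeP j1 → ¬ FreeP j2 → False := by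
      intro j1 j2 hj1 hj2 h12 hb1 hb2
      obtain ⟨b, hbH, hbO⟩ := hblocked j1 hj1 hb1 0 le_rfl (by simpa using G.len_le_T j1)
      obtain ⟨b', hbH', hbO'⟩ := hblocked j2 hj2 hb2 (G.T - G.len j2)
        (by linarith [G.len_le_T j2]) (by linarith)
      obtain ⟨hbC0, hbl, hbe, hbs⟩ := mem_hitset.1 hbH
      obtain ⟨hbC0', hbl', hbe', hbs'⟩ := mem_hitset.1 hbH'
      have hbC : b ∈ Cov := by rw [hCov]; exact hbC0
      have hbC' : b' ∈ Cov := by rw [hCov]; exact hbC0'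
      have hbj : ∀ jj ∈ D, jj ≠ b := fun jj hjj h => hDnC jj hjj (h ▸ hbC)
      have hbj' : ∀ jj ∈ D, jj ≠ b' := fun jj hjj h => hDnC jj hjj (h ▸ hbC')
      by_cases hbb : b = b'
      · subst hbb
        have hp3 := hpack3 j1 j2 b (hDO _ hj1) (hDO _ hj2) hbO h12 (hbj j1 hj1) (hbj j2 hj2)
        linarith
      · -- Cov = {b, b'}, A = ∅, all three jobs blocked, gap argument
        have hC2 : Cov.card ≤ 2 := by omega
        have hsubC : ({b, b'} : Finset (Fin G.n)) ⊆ Cov := by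
          intro k hk
          simp only [Finset.mem_insert, Finset.mem_singleton] at hk
          rcases hk with rfl | rfl <;> assumption
        have hCeq : Cov = {b, b'} :=
          (Finset.eq_of_subset_of_card_le hsubC (by rw [Finset.card_pair hbb]; exact hC2)).symm
        have hAempty : A = ∅ := by
          rw [hAdef, Finset.filter_eq_empty_iff]
          intro k hk
          rw [hCeq] at hk
          simp only [Finset.mem_insert, Finset.mem_singleton] at hk
          rcases hk with rfl | rfl
          · simp [hbO]
          · simp [hbO']
        have hball : ∀ j ∈ D, ¬ FreeP j := by
          intro j hj hf
          have hle := hfree j hj hf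
          rw [hAempty, Finset.sum_empty] at hle
          exact absurd hle (not_le.2 (hDw j hj))
        have horder : ∀ b1 b2 : Fin G.n, b1 ∈ Cov → b2 ∈ Cov → b1 ≠ b2 →
            0 < G.len b1 → 0 < G.len b2 → b1 ∈ O → b2 ∈ O → Cov = {b1, b2} →
            s.start b1 + G.len b1 ≤ s.start b2 → False := by
          intro b1 b2 hb1C hb2C hne hl1 hl2 hb1O hb2O hCeq2 hord
          have hgap : ∀ j ∈ D, s.start b1 < G.len j ∧
              s.start b2 - (s.start b1 + G.len b1) < G.len j ∧
              G.T - (s.start b2 + G.len b2) < G.len j := by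
            intro j hj
            have hTj := G.len_le_T j
            have hl1n := G.len_nonneg b1
            have hl2n := G.len_nonneg b2
            have hs1n := s.start_nonneg b1
            have hs2T := s.start_le b2
            refine ⟨?_, ?_, ?_⟩
            · obtain ⟨k, hkH, hkO⟩ := hblocked j hj (hball j hj) 0 le_rfl (by simpa using hTj)
              obtain ⟨hkC, hkl, hke, hks⟩ := mem_hitset.1 hkH
              rw [← hCov, hCeq2] at hkC
              simp only [Finset.mem_insert, Finset.mem_singleton] at hkC
              rcases hkC with rfl | rfl
              · linarith
              · linarith
            · by_contra hc
              push_neg at hc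
              have ht0' : (0:ℝ) ≤ s.start b1 + G.len b1 := by linarith
              have htT' : (s.start b1 + G.len b1) + G.len j ≤ G.T := by linarith
              obtain ⟨k, hkH, hkO⟩ := hblocked j hj (hball j hj) _ ht0' htT'
              obtain ⟨hkC, hkl, hke, hks⟩ := mem_hitset.1 hkH
              rw [← hCov, hCeq2] at hkC
              simp only [Finset.mem_insert, Finset.mem_singleton] at hkC
              rcases hkC with rfl | rfl
              · linarith
              · linarith
            · by_contra hc
              push_neg at hc
              have ht0' : (0:ℝ) ≤ G.T - G.len j := by linarith
              obtain ⟨k, hkH, hkO⟩ := hblocked j hj (hball j hj) (G.T - G.len j) ht0'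
                (by linarith)
              obtain ⟨hkC, hkl, hke, hks⟩ := mem_hitset.1 hkH
              rw [← hCov, hCeq2] at hkC
              simp only [Finset.mem_insert, Finset.mem_singleton] at hkC
              rcases hkC with rfl | rfl
              · linarith
              · linarith
          have hb1D : ∀ jj ∈ D, jj ≠ b1 := fun jj hjj h => hDnC jj hjj (h ▸ hb1C)
          have hb2D : ∀ jj ∈ D, jj ≠ b2 := fun jj hjj h => hDnC jj hjj (h ▸ hb2C)
          have h5 : G.len x + (G.len y + (G.len z + (G.len b1 + G.len b2))) ≤ G.T := by
            have hsub : ({x, y, z, b1, b2} : Finset (Fin G.n)) ⊆ O := by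
              intro k hk
              simp only [Finset.mem_insert, Finset.mem_singleton] at hk
              rcases hk with rfl | rfl | rfl | rfl | rfl
              · exact hDO _ hxD
              · exact hDO _ hyD
              · exact hDO _ hzD
              · exact hb1O
              · exact hb2O
            have hps := hpack _ hsub
            rwa [Finset.sum_insert (by simp [hxy, hxz, hb1D x hxD, hb2D x hxD]),
              Finset.sum_insert (by simp [hyz, hb1D y hyD, hb2D y hyD]),
              Finset.sum_insert (by simp [hb1D z hzD, hb2D z hzD]),
              Finset.sum_insert (by simp [hne]), Finset.sum_singleton] at hps
          obtain ⟨hgx, -, -⟩ := hgap x hxD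
          obtain ⟨-, hgy, -⟩ := hgap y hyD
          obtain ⟨-, -, hgz⟩ := hgap z hzD
          linarith
        rcases cov_disjoint hinj (mem_covset.1 hbC0) (mem_covset.1 hbC0') hbb hbl hbl'
          with h | h
        · exact horder b b' hbC hbC' hbb hbl hbl' hbO hbO' hCeq h
        · exact horder b' b hbC' hbC (Ne.symm hbb) hbl' hbl hbO' hbO
            (by rw [hCeq, Finset.pair_comm]) h
    have htail : ∀ v1 v2 zt : Fin G.n, v1 ∈ D → v2 ∈ D → zt ∈ D →
        v1 ≠ v2 → v1 ≠ zt → v2 ≠ zt → FreeP v1 → FreeP v2 →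
        ∑ k ∈ D, G.wt k ≤ V + ∑ k ∈ A, G.wt k := by
      intro v1 v2 zt h1 h2 h3 h12 h13 h23 hf1 hf2
      have hsubD : ({v1, v2, zt} : Finset (Fin G.n)) ⊆ D := by
        intro k hk
        simp only [Finset.mem_insert, Finset.mem_singleton] at hk
        rcases hk with rfl | rfl | rfl <;> assumption
      have hc3 : ({v1, v2, zt} : Finset (Fin G.n)).card = 3 := by
        rw [Finset.card_insert_of_notMem (by simp [h12, h13]),
          Finset.card_insert_of_notMem (by simp [h23]), Finset.card_singleton]
      have hDeq2 : ({v1, v2, zt} : Finset (Fin G.n)) = D :=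
        Finset.eq_of_subset_of_card_le hsubD (by omega)
      have hsum : ∑ k ∈ D, G.wt k = G.wt v1 + (G.wt v2 + G.wt zt) := by
        rw [← hDeq2, Finset.sum_insert (by simp [h12, h13]),
          Finset.sum_insert (by simp [h23]), Finset.sum_singleton]
      have hAvc : G.Av s v1 zt ∨ G.Av s v2 zt := by
        by_cases h : G.Av s v1 zt
        · exact Or.inl h
        · right
          obtain ⟨-, hg2⟩ := G.noAv s h
          have hp3 := hpack3 v1 v2 zt (hDO _ h1) (hDO _ h2) (hDO _ h3) h12 h13 h23
          exact ⟨0, le_rfl, by simpa using G.len_le_T v2, Or.inr (by linarith)⟩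
      rcases hAvc with h | h
      · have hp := hpair v1 h1 zt (Ne.symm h13) h
        have hf := hfree v2 h2 hf2
        linarith
      · have hp := hpair v2 h2 zt (Ne.symm h23) h
        have hf := hfree v1 h1 hf1
        linarith
    by_cases hfx : FreeP x
    · by_cases hfy : FreeP y
      · exact htail x y z hxD hyD hzD hxy hxz hyz hfx hfy
      · by_cases hfz : FreeP z
        · exact htail x z y hxD hzD hyD hxz hxy (Ne.symm hyz) hfx hfz
        · exact (htwo y z hyD hzD hyz hfy hfz).elim
    · by_cases hfy : FreeP y
      · by_cases hfz : FreeP z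
        · exact htail y z x hyD hzD hxD hyz (Ne.symm hxy) (Ne.symm hxz) hfy hfz
        · exact (htwo x z hxD hzD hxz hfx hfz).elim
      · exact (htwo x y hxD hyD hxy hfx hfy).elim
  · -- 4 jobs
    obtain ⟨x, E, hxE, hxIns, hE3⟩ := Finset.card_eq_succ.1 hu
    obtain ⟨y, z, w, hyz, hyw, hzw, hEeq⟩ := Finset.card_eq_three.1 hE3
    have hDeq : D = insert x ({y, z, w} : Finset (Fin G.n)) := by rw [← hxIns, hEeq]
    have hxy : x ≠ y := fun h => hxE (by rw [hEeq, h]; simp)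
    have hxz : x ≠ z := fun h => hxE (by rw [hEeq, h]; simp)
    have hxw : x ≠ w := fun h => hxE (by rw [hEeq, h]; simp)
    have hxD : x ∈ D := by rw [hDeq]; simp
    have hyD : y ∈ D := by rw [hDeq]; simp
    have hzD : z ∈ D := by rw [hDeq]; simp
    have hwD : w ∈ D := by rw [hDeq]; simp
    have hlx := hDl x hxD
    have hly := hDl y hyD
    have hlz := hDl z hzD
    have hlw := hDl w hwD
    have hex : ∃ κ, κ ∈ Cov ∧ 0 < G.len κ := by
      by_contra hc
      push_neg at hc
      have h1 := hhit x hxD 0 le_rfl (by simpa using G.len_le_T x)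
      have h2 : G.HitSet M s 0 x = ∅ := by
        rw [Finset.eq_empty_iff_forall_notMem]
        intro k hk
        obtain ⟨hkC, hkl, -, -⟩ := mem_hitset.1 hk
        rw [← hCov] at hkC
        exact absurd hkl (not_lt.2 (hc k hkC))
      rw [h2, Finset.sum_empty] at h1
      exact absurd h1 (not_le.2 (hDw x hxD))
    obtain ⟨κ, hκC, hκl⟩ := hex
    have hCeq : Cov = {κ} := by
      refine (Finset.eq_of_subset_of_card_le (Finset.singleton_subset_iff.2 hκC) ?_).symm
      rw [Finset.card_singleton]; omega
    have hκD : ∀ jj ∈ D, jj ≠ κ := fun jj hjj h => hDnC jj hjj (h ▸ hκC)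
    have hκhit : ∀ j ∈ D, ∀ t : ℝ, 0 ≤ t → t + G.len j ≤ G.T →
        t < s.start κ + G.len κ ∧ s.start κ < t + G.len j := by
      intro j hj t ht0 htT
      have h1 := hhit j hj t ht0 htT
      by_contra hc
      have h2 : G.HitSet M s t j = ∅ := by
        rw [Finset.eq_empty_iff_forall_notMem]
        intro k hk
        obtain ⟨hkC, hkl, hke, hks⟩ := mem_hitset.1 hk
        rw [← hCov, hCeq, Finset.mem_singleton] at hkC
        subst hkC
        exact hc ⟨hke, hks⟩
      rw [h2, Finset.sum_empty] at h1
      exact absurd h1 (not_le.2 (hDw j hj))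
    by_cases hκO : κ ∈ O
    · exfalso
      have h1 := (hκhit x hxD 0 le_rfl (by simpa using G.len_le_T x)).2
      have h2 := (hκhit y hyD (G.T - G.len y) (by linarith [G.len_le_T y]) (by linarith)).1
      have hp3 := hpack3 x y κ (hDO _ hxD) (hDO _ hyD) hκO hxy (hκD x hxD) (hκD y hyD)
      linarith
    · have hAeq : A = {κ} := by
        rw [hAdef, hCeq, Finset.filter_singleton, if_pos hκO]
      have hVκ : V = G.wt κ := by rw [← hVeq, hCeq, Finset.sum_singleton]
      have hsumA : ∑ k ∈ A, G.wt k = G.wt κ := by rw [hAeq, Finset.sum_singleton]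
      have hpack4 : G.len x + G.len y + G.len z + G.len w ≤ G.T := by
        have hsub : ({x, y, z, w} : Finset (Fin G.n)) ⊆ O := by
          intro k hk
          simp only [Finset.mem_insert, Finset.mem_singleton] at hk
          rcases hk with rfl | rfl | rfl | rfl
          exacts [hDO _ hxD, hDO _ hyD, hDO _ hzD, hDO _ hwD]
        have hps := hpack _ hsub
        rw [Finset.sum_insert (by simp [hxy, hxz, hxw]),
          Finset.sum_insert (by simp [hyz, hyw]),
          Finset.sum_insert (by simp [hzw]), Finset.sum_singleton] at hps
        linarith
      have hsumD : ∑ k ∈ D, G.wt k = G.wt x + (G.wt y + (G.wt z + G.wt w)) := by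
        rw [hDeq, Finset.sum_insert (by simp [hxy, hxz, hxw]),
          Finset.sum_insert (by simp [hyz, hyw]),
          Finset.sum_insert (by simp [hzw]), Finset.sum_singleton]
      have hUp : ∀ a b : Fin G.n, a ∈ D → b ∈ D → a ≠ b →
          (G.Av s a b ∨ G.Av s b a) → G.wt a + G.wt b ≤ V := by
        intro a b ha hb hab h
        rcases h with h | h
        · exact hpair a ha b (Ne.symm hab) h
        · have := hpair b hb a hab h
          linarith
      have hnU : ∀ a b : Fin G.n, ¬ (G.Av s a b ∨ G.Av s b a) →
          G.T < 2 * G.len a + G.len b ∧ G.T < 2 * G.len b + G.len a := by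
        intro a b h
        push_neg at h
        obtain ⟨hs1, hg1⟩ := G.noAv s h.1
        obtain ⟨hs2, hg2⟩ := G.noAv s h.2
        constructor
        · linarith
        · linarith
      by_cases h1 : G.Av s x z ∨ G.Av s z x
      · by_cases h2 : G.Av s y w ∨ G.Av s w y
        · have e1 := hUp x z hxD hzD hxz h1
          have e2 := hUp y w hyD hwD hyw h2
          linarith
        · have hb := hnU y w h2
          have h3 : G.Av s x y ∨ G.Av s y x := by
            by_contra h4
            have ha := hnU x y h4
            linarith [ha.1, hb.2]
          have h5 : G.Av s z w ∨ G.Av s w z := by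
            by_contra h6
            have hcN := hnU z w h6
            linarith [hcN.1, hb.1]
          have e1 := hUp x y hxD hyD hxy h3
          have e2 := hUp z w hzD hwD hzw h5
          linarith
      · have ha := hnU x z h1
        have h3 : G.Av s x y ∨ G.Av s y x := by
          by_contra h4
          have hb := hnU x y h4
          linarith [hb.2, ha.2]
        have h5 : G.Av s z w ∨ G.Av s w z := by
          by_contra h6
          have hcN := hnU z w h6
          linarith [hcN.2, ha.1]
        have e1 := hUp x y hxD hyD hxy h3
        have e2 := hUp z w hzD hwD hzw h5
        linarith
  · -- 5 jobs: impossible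
    exfalso
    have hC0 : Cov = ∅ := Finset.card_eq_zero.1 (by omega)
    obtain ⟨x, hx⟩ := Finset.card_pos.1 (by omega : 0 < D.card)
    have h1 := hhit x hx 0 le_rfl (by simpa using G.len_le_T x)
    have h2 : G.HitSet M s 0 x = ∅ := by
      rw [Finset.eq_empty_iff_forall_notMem]
      intro k hk
      have hkC := (mem_hitset.1 hk).1
      rw [← hCov, hC0] at hkC
      exact absurd hkC (Finset.notMem_empty k)
    rw [h2, Finset.sum_empty] at h1
    exact absurd h1 (not_le.2 (hDw x hx))

end Game


/-- For games in `G_single` with at most 5 jobs, the price of anarchy is at most 2. -/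
theorem single_PoA_le_two (G : Game) (hsingle : G.Single) (hn : G.n ≤ 5)
    (M : G.TieBreak) (s : G.Profile) (hNE : G.IsNE M s) :
    G.valOPT ≤ 2 * G.val s := by
  classical
  have hinj : Function.Injective G.color := hsingle.injective
  have hkey := Game.key_profit_le hinj hn M s hNE
  have h2 : ∀ τ : G.Profile, G.val τ ≤ 2 * G.val s := by
    intro τ
    rcases Set.eq_empty_or_nonempty {x : ℝ | ∃ γ : G.Config, x = G.profit τ γ} with he | hne
    · have hτ0 : G.val τ = 0 := by unfold Game.val; rw [he, Real.sSup_empty]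
      rw [hτ0]
      linarith [G.val_nonneg s]
    · refine csSup_le hne ?_
      rintro x ⟨γ, rfl⟩
      exact hkey τ γ
  unfold Game.valOPT
  refine csSup_le ⟨G.val ⟨fun _ => 0, fun j => le_rfl, fun j => by simpa using G.len_le_T j⟩,
    ⟨_, rfl⟩⟩ ?_
  rintro x ⟨τ, rfl⟩
  exact h2 τ
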